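/- A coherent set of desirable option sets K is binary if and only if for every A ∈ K with at least two elements, there exists u ∈ A such that A \ {u} ∈ K. -/

import Mathlib

/-- Axiom K0: removal of the zero option. -/
def AxK0 {V : Type*} [AddCommGroup V] [Module ℝ V] (K : Set (Set V)) : Prop :=
  ∀ A ∈ K, A \ {0} ∈ K

/-- Axiom K1: the singleton of zero is not a desirable option set. -/
def AxK1 {V : Type*} [AddCommGroup V] [Module ℝ V] (K : Set (Set V)) : Prop :=
  ({0} : Set V) ∉ K

/-- Axiom K2: singletons of (background-)positive options are desirable option sets. -/
def AxK2 {V : Type*} [AddCommGroup V] [Module ℝ V] (Vpos : Set V) (K : Set (Set V)) : Prop :=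
  ∀ u ∈ Vpos, ({u} : Set V) ∈ K

/-- Axiom K3: closure under elementwise positive combinations of two members. -/
def AxK3 {V : Type*} [AddCommGroup V] [Module ℝ V] (K : Set (Set V)) : Prop :=
  ∀ A1 ∈ K, ∀ A2 ∈ K, ∀ l m : V → V → ℝ,
    (∀ u ∈ A1, ∀ v ∈ A2, 0 ≤ l u v ∧ 0 ≤ m u v ∧ 0 < l u v + m u v) →
    {w : V | ∃ u ∈ A1, ∃ v ∈ A2, w = l u v • u + m u v • v} ∈ K

/-- Axiom K4: upward closure under inclusion (within finite option sets). -/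
def AxK4 {V : Type*} [AddCommGroup V] [Module ℝ V] (K : Set (Set V)) : Prop :=
  ∀ A1 ∈ K, ∀ A2 : Set V, A2.Finite → A1 ⊆ A2 → A2 ∈ K

/-- Coherence of a set of desirable option sets (a subset of the finite option sets). -/
def CoherentK {V : Type*} [AddCommGroup V] [Module ℝ V] (Vpos : Set V)
    (K : Set (Set V)) : Prop :=
  (∀ A ∈ K, A.Finite) ∧ AxK0 K ∧ AxK1 K ∧ AxK2 Vpos K ∧ AxK3 K ∧ AxK4 K

/-- Coherence of a set of desirable options. -/
def CoherentD {V : Type*} [AddCommGroup V] [Module ℝ V] (Vpos D : Set V) : Prop :=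
  (0 : V) ∉ D ∧ Vpos ⊆ D ∧
  ∀ u ∈ D, ∀ v ∈ D, ∀ l m : ℝ, 0 ≤ l → 0 ≤ m → 0 < l + m → l • u + m • v ∈ D

/-- `K_D`: the binary set of desirable option sets generated by `D`. -/
def KD {V : Type*} [AddCommGroup V] [Module ℝ V] (D : Set V) : Set (Set V) :=
  {A | A.Finite ∧ (A ∩ D).Nonempty}

/-- `D_K`: the set of options whose singletons belong to `K`. -/
def DK {V : Type*} [AddCommGroup V] [Module ℝ V] (K : Set (Set V)) : Set V :=
  {u | ({u} : Set V) ∈ K}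

/-- A set of desirable option sets is binary if it is determined by singleton assessments. -/
def BinaryK {V : Type*} [AddCommGroup V] [Module ℝ V] (K : Set (Set V)) : Prop :=
  ∀ A : Set V, A.Finite → (A ∈ K ↔ ∃ u ∈ A, ({u} : Set V) ∈ K)

/-- `posi S`: all finite positive linear combinations of elements of `S`. -/
def Posi {V : Type*} [AddCommGroup V] [Module ℝ V] (S : Set V) : Set V :=
  {w | ∃ n : ℕ, 0 < n ∧ ∃ (l : Fin n → ℝ) (u : Fin n → V),
    (∀ k, 0 < l k) ∧ (∀ k, u k ∈ S) ∧ w = ∑ k, l k • u k}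

/-- Total set of desirable options. -/
def TotalD {V : Type*} [AddCommGroup V] [Module ℝ V] (Vpos D : Set V) : Prop :=
  CoherentD Vpos D ∧ ∀ u : V, u ≠ 0 → u ∈ D ∨ -u ∈ D

/-- Total set of desirable option sets. -/
def TotalK {V : Type*} [AddCommGroup V] [Module ℝ V] (Vpos : Set V)
    (K : Set (Set V)) : Prop :=
  CoherentK Vpos K ∧ ∀ u : V, u ≠ 0 → ({u, -u} : Set V) ∈ K

/-- Mixing set of desirable options. -/
def MixingD {V : Type*} [AddCommGroup V] [Module ℝ V] (Vpos D : Set V) : Prop :=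
  CoherentD Vpos D ∧ ∀ A : Set V, A.Finite → (Posi A ∩ D).Nonempty → (A ∩ D).Nonempty

/-- Mixing set of desirable option sets. -/
def MixingK {V : Type*} [AddCommGroup V] [Module ℝ V] (Vpos : Set V)
    (K : Set (Set V)) : Prop :=
  CoherentK Vpos K ∧
    ∀ A B : Set V, A.Finite → B ∈ K → A ⊆ B → B ⊆ Posi A → A ∈ K

/-- `V_{≤0}`: the non-positive options (zero together with the strictly negative options). -/
def Vneg {V : Type*} [AddCommGroup V] [Module ℝ V] (Vpos : Set V) : Set V :=
  {u | u = 0 ∨ -u ∈ Vpos}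

/-- The operator `RN`, adding smaller option sets by removing non-positive options. -/
def RN {V : Type*} [AddCommGroup V] [Module ℝ V] (Vpos : Set V)
    (K : Set (Set V)) : Set (Set V) :=
  {A | A.Finite ∧ ∃ B ∈ K, B \ Vneg Vpos ⊆ A ∧ A ⊆ B}

theorem stmt14 {V : Type*} [AddCommGroup V] [Module ℝ V]
    (Vpos : Set V) (K : Set (Set V)) (hK : CoherentK Vpos K) :
    BinaryK K ↔ ∀ A ∈ K, A.Nontrivial → ∃ u ∈ A, A \ {u} ∈ K := by

  obtain ⟨hfin, h0, h1, h2, h3, h4⟩ := hK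
  constructor
  · intro hb A hA hnt
    obtain ⟨u, hu, hsu⟩ := (hb A (hfin A hA)).1 hA
    obtain ⟨v, hv, hvu⟩ := hnt.exists_ne u
    refine ⟨v, hv, ?_⟩
    exact (hb (A \ {v}) ((hfin A hA).diff)).2 ⟨u, ⟨hu, by simp [Ne.symm hvu]⟩, hsu⟩
  · intro hr
    have key : ∀ n : ℕ, ∀ A : Set V, A ∈ K → A.ncard ≤ n → ∃ u ∈ A, ({u} : Set V) ∈ K := by
      intro n
      induction n with
      | zero =>
        intro A hA hcard
        have hf := hfin A hA
        have hAe : A = ∅ := by rw [← Set.ncard_eq_zero hf]; omega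
        exfalso
        exact h1 (h4 A hA {0} (Set.finite_singleton 0) (by simp [hAe]))
      | succ n ih =>
        intro A hA hcard
        by_cases hnt : A.Nontrivial
        · obtain ⟨u, hu, hAu⟩ := hr A hA hnt
          have hlt : (A \ {u}).ncard ≤ n := by
            have := Set.ncard_diff_singleton_lt_of_mem hu (hfin A hA)
            omega
          obtain ⟨v, hv, hvK⟩ := ih (A \ {u}) hAu hlt
          exact ⟨v, hv.1, hvK⟩
        · rcases Set.eq_empty_or_nonempty A with rfl | ⟨a, ha⟩
          · exact absurd (h4 ∅ hA {0} (Set.finite_singleton 0) (Set.empty_subset _)) h1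
          · have hA1 : A = {a} := ((Set.not_nontrivial_iff).1 hnt).eq_singleton_of_mem ha
            exact ⟨a, ha, hA1 ▸ hA⟩
    intro A hAf
    constructor
    · intro hA; exact key A.ncard A hA le_rfl
    · rintro ⟨u, hu, huK⟩
      exact h4 {u} huK A hAf (Set.singleton_subset_iff.2 hu)
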